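/- arXiv:2107.11825 — 2 statements merged into one kernel-verified Lean document; each statement's English description precedes it below -/
import Mathlib

section
/- Let f ∈ ℚ[x₁,…,xₙ] satisfy: (a) the infimum of f over ℝⁿ is attained, and (b) the gradient ideal I_grad(f) is zero-dimensional and radical. Then f is non-negative on ℝⁿ if and only if f is a weighted sum of squares of polynomials with rational coefficients modulo I_grad(f), i.e., f = Σⱼ cⱼ qⱼ² + Σᵢ φᵢ ∂f/∂xᵢ with cⱼ ∈ ℚ positive and qⱼ, φᵢ ∈ ℚ[x₁,…,xₙ]. -/
section ArtinSchreier

variable {K : Type*} [Field K]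

lemma IsSumSq.sq (x : K) : IsSumSq (x ^ 2) := by
  have := IsSumSq.sq_add x IsSumSq.zero
  simpa [pow_two] using this

lemma IsSumSq.mul_left_sq (a : K) {y : K} (hy : IsSumSq y) : IsSumSq (a ^ 2 * y) := by
  induction hy with
  | zero => simpa using IsSumSq.zero
  | @sq_add b S pS ih =>
      have : a ^ 2 * (b * b + S) = (a * b) * (a * b) + a ^ 2 * S := by ring
      rw [this]
      exact IsSumSq.sq_add _ ih


structure IsPre (P : Set K) : Prop where
  sq_mem : ∀ x : K, x ^ 2 ∈ P
  add_mem : ∀ {x y : K}, x ∈ P → y ∈ P → x + y ∈ P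
  mul_mem : ∀ {x y : K}, x ∈ P → y ∈ P → x * y ∈ P
  neg_one_notMem : (-1 : K) ∉ P

namespace IsPre

variable {P : Set K}

lemma zero_mem (hP : IsPre P) : (0 : K) ∈ P := by simpa using hP.sq_mem 0

lemma one_mem (hP : IsPre P) : (1 : K) ∈ P := by simpa using hP.sq_mem 1

/-- Extending a preordering by an element `x` such that `-x ∉ P`. -/
lemma extend (hP : IsPre P) {x : K} (hx : -x ∉ P) :
    IsPre {z | ∃ p ∈ P, ∃ q ∈ P, z = p + x * q} ∧
      P ⊆ {z | ∃ p ∈ P, ∃ q ∈ P, z = p + x * q} ∧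
      x ∈ {z | ∃ p ∈ P, ∃ q ∈ P, z = p + x * q} := by
  refine ⟨⟨?_, ?_, ?_, ?_⟩, ?_, ?_⟩
  · intro z
    exact ⟨z ^ 2, hP.sq_mem z, 0, hP.zero_mem, by ring⟩
  · rintro _ _ ⟨p, hp, q, hq, rfl⟩ ⟨p', hp', q', hq', rfl⟩
    exact ⟨p + p', hP.add_mem hp hp', q + q', hP.add_mem hq hq', by ring⟩
  · rintro _ _ ⟨p, hp, q, hq, rfl⟩ ⟨p', hp', q', hq', rfl⟩
    refine ⟨p * p' + x ^ 2 * (q * q'),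
      hP.add_mem (hP.mul_mem hp hp') (hP.mul_mem (hP.sq_mem x) (hP.mul_mem hq hq')),
      p * q' + q * p', hP.add_mem (hP.mul_mem hp hq') (hP.mul_mem hq hp'), by ring⟩
  · rintro ⟨p, hp, q, hq, heq⟩
    by_cases hq0 : q = 0
    · have h1 : (-1 : K) = p := by simpa [hq0] using heq
      exact hP.neg_one_notMem (by rwa [← h1] at hp)
    · apply hx
      have hq' : q * q⁻¹ = 1 := mul_inv_cancel₀ hq0
      have h1 : (1 : K) + p = -(x * q) := by linear_combination -heq
      have hxval : -x = (1 + p) * q * (q⁻¹) ^ 2 := by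
        rw [h1, show -(x * q) * q * (q⁻¹) ^ 2 = -x * ((q * q⁻¹) * (q * q⁻¹)) from by ring, hq']
        ring
      rw [hxval]
      exact hP.mul_mem (hP.mul_mem (hP.add_mem hP.one_mem hp) hq) (hP.sq_mem q⁻¹)
  · intro p hp
    exact ⟨p, hp, 0, hP.zero_mem, by ring⟩
  · exact ⟨0, hP.zero_mem, 1, hP.one_mem, by ring⟩

end IsPre

/-- Every nonempty family of preorderings containing a fixed one has a maximal element. -/
lemma exists_maximal_isPre {P₀ : Set K} (h₀ : IsPre P₀) :
    ∃ P : Set K, IsPre P ∧ P₀ ⊆ P ∧ ∀ Q : Set K, IsPre Q → P ⊆ Q → Q = P := by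
  obtain ⟨P, hP₀P, hmax⟩ := zorn_subset_nonempty {P : Set K | IsPre P}
    (fun c hcS hchain hcne => by
      refine ⟨⋃₀ c, ?_, fun s hs => Set.subset_sUnion_of_mem hs⟩
      obtain ⟨s₀, hs₀⟩ := hcne
      refine ⟨?_, ?_, ?_, ?_⟩
      · intro x
        exact Set.mem_sUnion.mpr ⟨s₀, hs₀, (hcS hs₀).sq_mem x⟩
      · rintro x y hx hy
        obtain ⟨s, hs, hxs⟩ := hx
        obtain ⟨t, ht, hyt⟩ := hy
        rcases hchain.total hs ht with hst | hts
        · exact ⟨t, ht, (hcS ht).add_mem (hst hxs) hyt⟩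
        · exact ⟨s, hs, (hcS hs).add_mem hxs (hts hyt)⟩
      · rintro x y hx hy
        obtain ⟨s, hs, hxs⟩ := hx
        obtain ⟨t, ht, hyt⟩ := hy
        rcases hchain.total hs ht with hst | hts
        · exact ⟨t, ht, (hcS ht).mul_mem (hst hxs) hyt⟩
        · exact ⟨s, hs, (hcS hs).mul_mem hxs (hts hyt)⟩
      · rintro ⟨s, hs, hmem⟩
        exact (hcS hs).neg_one_notMem hmem) P₀ h₀
  exact ⟨P, hmax.prop, hP₀P,
    fun Q hQ hPQ => Set.Subset.antisymm (hmax.le_of_ge hQ hPQ) hPQ⟩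


theorem exists_ringHom_neg_of_not_isSumSq {K : Type*} [Field K] [Algebra ℚ K]
    [FiniteDimensional ℚ K] {a : K} (ha : ¬ IsSumSq a) :
    ∃ σ : K →+* ℝ, σ a < 0 := by
  haveI : CharZero K := charZero_of_injective_algebraMap (algebraMap ℚ K).injective
  -- The sums of squares form a preordering.
  have hT : IsPre {x : K | IsSumSq x} := by
    refine ⟨fun x => IsSumSq.sq x, fun hx hy => hx.add hy, fun hx hy => hx.mul hy, ?_⟩
    intro hneg
    apply ha
    have hid : a = ((a + 1) / 2) ^ 2 + (-1) * ((a - 1) / 2) ^ 2 := by ring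
    rw [hid]
    exact (IsSumSq.sq _).add (hneg.mul (IsSumSq.sq _))
  -- Extend by `-a` and take a maximal preordering.
  have hnotmem : -(-a) ∉ {x : K | IsSumSq x} := by simpa using ha
  obtain ⟨hpre₀, hsub₀, hmem₀⟩ := hT.extend hnotmem
  obtain ⟨P, hP, hP₀P, hmax⟩ := exists_maximal_isPre hpre₀
  have haP : -a ∈ P := hP₀P hmem₀
  -- Maximality gives totality.
  have htotal : ∀ x : K, x ∈ P ∨ -x ∈ P := by
    intro x
    by_cases hx : -x ∈ P
    · exact Or.inr hx
    · left
      obtain ⟨hpre', hsub', hx'⟩ := hP.extend hx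
      have hQ := hmax _ hpre' hsub'
      rw [← hQ]
      exact hx'
  have hzero : ∀ x : K, x ∈ P → -x ∈ P → x = 0 := by
    intro x hx hnx
    by_contra hx0
    apply hP.neg_one_notMem
    have hx' : x * x⁻¹ = 1 := mul_inv_cancel₀ hx0
    have hid : (-1 : K) = (x * -x) * (x⁻¹) ^ 2 := by
      rw [show (x * -x) * (x⁻¹) ^ 2 = -((x * x⁻¹) * (x * x⁻¹)) from by ring, hx']
      ring
    rw [hid]
    exact hP.mul_mem (hP.mul_mem hx hnx) (hP.sq_mem _)
  -- Build the ordered field structure.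
  let C : RingCone K :=
  { carrier := P
    mul_mem' := fun hx hy => hP.mul_mem hx hy
    one_mem' := hP.one_mem
    add_mem' := fun hx hy => hP.add_mem hx hy
    zero_mem' := hP.zero_mem
    eq_zero_of_mem_of_neg_mem' := fun hx hnx => hzero _ hx hnx }
  haveI : HasMemOrNegMem C := ⟨fun x => htotal x⟩
  letI : DecidablePred (· ∈ C) := Classical.decPred _
  letI lor : LinearOrder K := LinearOrder.mkOfAddGroupCone C
  haveI : IsOrderedRing K := IsOrderedRing.mkOfCone C
  haveI lof : IsStrictOrderedRing K := IsOrderedRing.toIsStrictOrderedRing K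
  haveI : Algebra.IsIntegral ℚ K := Algebra.IsIntegral.of_finite ℚ K
  haveI harch : Archimedean K := by
    rw [archimedean_iff_nat_le]
    intro x
    have hint : IsIntegral ℚ x := Algebra.IsIntegral.isIntegral x
    set p := minpoly ℚ x with hp
    have hm : p.Monic := minpoly.monic hint
    set d := p.natDegree with hd
    have hdpos : 0 < d := minpoly.natDegree_pos hint
    have h0 : (Polynomial.aeval x) p = 0 := minpoly.aeval ℚ x
    have hsum : (∑ i ∈ Finset.range (d + 1), p.coeff i • x ^ i) = 0 := by
      rw [← Polynomial.aeval_eq_sum_range, h0]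
    rw [Finset.sum_range_succ, hm.coeff_natDegree, one_smul] at hsum
    have hxd : x ^ d = -∑ i ∈ Finset.range d, p.coeff i • x ^ i :=
      eq_neg_of_add_eq_zero_right hsum
    set M : ℚ := 1 + ∑ i ∈ Finset.range d, |p.coeff i| with hM
    refine ⟨⌈M⌉₊, ?_⟩
    by_contra hlt
    push_neg at hlt
    have hM1 : (1 : ℚ) ≤ M := le_add_of_nonneg_right (Finset.sum_nonneg fun i _ => abs_nonneg _)
    have hMceil : M ≤ (⌈M⌉₊ : ℚ) := Nat.le_ceil M
    have hcast : ((⌈M⌉₊ : ℚ) : K) = ((⌈M⌉₊ : ℕ) : K) := by push_cast; ring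
    have hx1 : (1 : K) < x := by
      calc (1 : K) = ((1 : ℚ) : K) := by push_cast; ring
        _ ≤ ((M : ℚ) : K) := Rat.cast_le.mpr hM1
        _ ≤ ((⌈M⌉₊ : ℚ) : K) := Rat.cast_le.mpr hMceil
        _ = ((⌈M⌉₊ : ℕ) : K) := hcast
        _ < x := hlt
    have hx0 : (0 : K) < x := lt_trans zero_lt_one hx1
    have hb1 : x ^ d ≤ ∑ i ∈ Finset.range d, ((|p.coeff i| : ℚ) : K) * x ^ i := by
      rw [hxd, ← Finset.sum_neg_distrib]
      refine Finset.sum_le_sum fun i _ => ?_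
      rw [Algebra.smul_def, eq_ratCast, ← neg_mul, ← Rat.cast_neg]
      exact mul_le_mul_of_nonneg_right (Rat.cast_le.mpr (neg_le_abs _)) (pow_nonneg hx0.le i)
    have hb2 : (∑ i ∈ Finset.range d, ((|p.coeff i| : ℚ) : K) * x ^ i) ≤
        ∑ i ∈ Finset.range d, ((|p.coeff i| : ℚ) : K) * x ^ (d - 1) := by
      refine Finset.sum_le_sum fun i hi => ?_
      have hi' := Finset.mem_range.mp hi
      refine mul_le_mul_of_nonneg_left ?_ (by positivity)
      exact pow_le_pow_right₀ hx1.le (by omega : i ≤ d - 1)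
    have hb3 : (∑ i ∈ Finset.range d, ((|p.coeff i| : ℚ) : K) * x ^ (d - 1)) =
        ((M - 1 : ℚ) : K) * x ^ (d - 1) := by
      rw [← Finset.sum_mul]
      congr 1
      rw [hM]
      push_cast
      ring
    have hxpow : (0 : K) < x ^ (d - 1) := pow_pos hx0 _
    have hxle : x ≤ ((M - 1 : ℚ) : K) := by
      have hchain : x * x ^ (d - 1) ≤ ((M - 1 : ℚ) : K) * x ^ (d - 1) := by
        calc x * x ^ (d - 1) = x ^ d := by
              rw [← pow_succ']
              congr 1
              omega
          _ ≤ _ := le_trans hb1 (le_trans hb2 (le_of_eq hb3))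
      rw [mul_comm x _, mul_comm _ (x ^ (d - 1))] at hchain
      exact le_of_mul_le_mul_left hchain hxpow
    have : x < x := by
      calc x ≤ ((M - 1 : ℚ) : K) := hxle
        _ < ((M : ℚ) : K) := by
            rw [show ((M - 1 : ℚ) : K) = ((M : ℚ) : K) - 1 by push_cast; ring]
            linarith
        _ ≤ ((⌈M⌉₊ : ℚ) : K) := Rat.cast_le.mpr hMceil
        _ = ((⌈M⌉₊ : ℕ) : K) := hcast
        _ < x := hlt
    exact lt_irrefl x this
  -- The induced embedding into ℝ.
  let σo := LinearOrderedField.inducedOrderRingHom K ℝ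
  refine ⟨σo.toRingHom, ?_⟩
  have hale : a ≤ 0 := by
    show (0 : K) - a ∈ C
    have : (0 : K) - a ∈ P := by simpa [zero_sub] using haP
    exact this
  have hane : a ≠ 0 := fun h => ha (h ▸ IsSumSq.zero)
  have halt : a < 0 := lt_of_le_of_ne hale hane
  have hmono : σo.toRingHom a ≤ σo.toRingHom 0 := σo.monotone' halt.le
  rw [map_zero] at hmono
  have hne : σo.toRingHom a ≠ 0 := by
    intro h
    exact hane (σo.toRingHom.injective (by rw [h, map_zero]))
  exact lt_of_le_of_ne hmono hne

end ArtinSchreier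

open MvPolynomial

noncomputable section

variable {n : ℕ}

/-- Coefficientwise application of a `ℚ`-linear functional `π : ℂ → ℚ`. -/
def projC (π : ℂ →ₗ[ℚ] ℚ) (p : MvPolynomial (Fin n) ℂ) : MvPolynomial (Fin n) ℚ :=
  ∑ m ∈ p.support, MvPolynomial.monomial m (π (p.coeff m))

lemma coeff_projC (π : ℂ →ₗ[ℚ] ℚ) (p : MvPolynomial (Fin n) ℂ) (m : Fin n →₀ ℕ) :
    (projC π p).coeff m = π (p.coeff m) := by
  rw [projC, MvPolynomial.coeff_sum]
  rw [Finset.sum_eq_single m]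
  · simp [MvPolynomial.coeff_monomial]
  · intro b _ hb
    simp [MvPolynomial.coeff_monomial, hb]
  · intro hm
    simp [MvPolynomial.coeff_monomial, MvPolynomial.notMem_support_iff.mp hm]

lemma projC_add (π : ℂ →ₗ[ℚ] ℚ) (p q : MvPolynomial (Fin n) ℂ) :
    projC π (p + q) = projC π p + projC π q := by
  apply MvPolynomial.ext
  intro m
  simp [coeff_projC, MvPolynomial.coeff_add]

lemma projC_monomial (π : ℂ →ₗ[ℚ] ℚ) (m : Fin n →₀ ℕ) (c : ℂ) :
    projC π (MvPolynomial.monomial m c) = MvPolynomial.monomial m (π c) := by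
  apply MvPolynomial.ext
  intro m'
  rw [coeff_projC]
  rcases eq_or_ne m m' with h | h
  · simp [h, MvPolynomial.coeff_monomial]
  · simp [MvPolynomial.coeff_monomial, h]

/-- Semilinearity of `projC` over rational polynomials. -/
lemma projC_mul_map (π : ℂ →ₗ[ℚ] ℚ) (u : MvPolynomial (Fin n) ℂ)
    (h : MvPolynomial (Fin n) ℚ) :
    projC π (u * MvPolynomial.map (algebraMap ℚ ℂ) h) = projC π u * h := by
  induction h using MvPolynomial.induction_on' with
  | add p q hp hq => rw [map_add, mul_add, projC_add, hp, hq, mul_add]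
  | monomial m q =>
      rw [MvPolynomial.map_monomial]
      apply MvPolynomial.ext
      intro m'
      rw [coeff_projC, MvPolynomial.coeff_mul_monomial', MvPolynomial.coeff_mul_monomial']
      split_ifs with hle
      · rw [coeff_projC]
        have : u.coeff (m' - m) * algebraMap ℚ ℂ q = q • u.coeff (m' - m) := by
          rw [Algebra.smul_def]; ring
        rw [this, map_smul]
        simp [Rat.smul_def]
        ring
      · simp

end

noncomputable section

/-- Coefficientwise projection for univariate polynomials. -/
def projP (π : ℂ →ₗ[ℚ] ℚ) (u : Polynomial ℂ) : Polynomial ℚ :=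
  ∑ k ∈ u.support, Polynomial.monomial k (π (u.coeff k))

lemma coeff_projP (π : ℂ →ₗ[ℚ] ℚ) (u : Polynomial ℂ) (k : ℕ) :
    (projP π u).coeff k = π (u.coeff k) := by
  rw [projP, Polynomial.finset_sum_coeff]
  rw [Finset.sum_eq_single k]
  · simp [Polynomial.coeff_monomial]
  · intro b _ hb
    simp [Polynomial.coeff_monomial, hb]
  · intro hk
    simp [Polynomial.coeff_monomial, Polynomial.notMem_support_iff.mp hk]

/-- Compatibility of the two coefficientwise projections with substituting `X j`. -/
lemma projC_aeval_X (π : ℂ →ₗ[ℚ] ℚ) {n : ℕ} (j : Fin n) (u : Polynomial ℂ) :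
    projC π (Polynomial.aeval (MvPolynomial.X j : MvPolynomial (Fin n) ℂ) u) =
      Polynomial.aeval (MvPolynomial.X j : MvPolynomial (Fin n) ℚ) (projP π u) := by
  induction u using Polynomial.induction_on' with
  | add p q hp hq =>
      rw [map_add, projC_add, hp, hq, show projP π (p + q) = projP π p + projP π q from ?_,
        map_add]
      apply Polynomial.ext
      intro k
      simp [coeff_projP]
  | monomial k c =>
      have h1 : Polynomial.aeval (MvPolynomial.X j : MvPolynomial (Fin n) ℂ)
          (Polynomial.monomial k c) = MvPolynomial.monomial (Finsupp.single j k) c := by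
        rw [Polynomial.aeval_monomial, MvPolynomial.X_pow_eq_monomial]
        rw [show algebraMap ℂ (MvPolynomial (Fin n) ℂ) c = MvPolynomial.C c from rfl]
        rw [MvPolynomial.C_mul_monomial, mul_one]
      have h2 : projP π (Polynomial.monomial k c) = Polynomial.monomial k (π c) := by
        apply Polynomial.ext
        intro k'
        rw [coeff_projP]
        rcases eq_or_ne k k' with h | h
        · simp [h, Polynomial.coeff_monomial]
        · simp [Polynomial.coeff_monomial, h]
      rw [h1, projC_monomial, h2, Polynomial.aeval_monomial, MvPolynomial.X_pow_eq_monomial,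
        show algebraMap ℚ (MvPolynomial (Fin n) ℚ) (π c) = MvPolynomial.C (π c) from rfl,
        MvPolynomial.C_mul_monomial, mul_one]

end

section Finiteness

variable {n : ℕ}

theorem moduleFinite_of_gradient_finite (f : MvPolynomial (Fin n) ℚ)
    (hfin : {x : Fin n → ℂ | ∀ i, MvPolynomial.aeval x (MvPolynomial.pderiv i f) = 0}.Finite) :
    Module.Finite ℚ
      (MvPolynomial (Fin n) ℚ ⧸ Ideal.span (Set.range fun i => MvPolynomial.pderiv i f)) := by
  classical
  set I : Ideal (MvPolynomial (Fin n) ℚ) :=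
    Ideal.span (Set.range fun i => MvPolynomial.pderiv i f) with hI
  set F : MvPolynomial (Fin n) ℂ := MvPolynomial.map (algebraMap ℚ ℂ) f with hF
  set J : Ideal (MvPolynomial (Fin n) ℂ) :=
    Ideal.span (Set.range fun i => MvPolynomial.pderiv i F) with hJ
  -- identify the zero locus
  have hzl : MvPolynomial.zeroLocus ℂ J =
      {x : Fin n → ℂ | ∀ i, MvPolynomial.aeval x (MvPolynomial.pderiv i f) = 0} := by
    rw [hJ, MvPolynomial.zeroLocus_span]
    ext x
    simp only [Set.mem_setOf_eq]
    constructor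
    · intro h i
      have h2 := h (MvPolynomial.pderiv i F) ⟨i, rfl⟩
      rw [hF, MvPolynomial.pderiv_map, MvPolynomial.aeval_map_algebraMap] at h2
      exact h2
    · intro h p hp
      obtain ⟨i, rfl⟩ := hp
      show MvPolynomial.eval x (MvPolynomial.pderiv i F) = 0
      rw [hF, MvPolynomial.pderiv_map, MvPolynomial.eval_map, ← MvPolynomial.aeval_def]
      exact h i
  have hZfin : (MvPolynomial.zeroLocus ℂ J).Finite := by rw [hzl]; exact hfin
  -- the rational projection π with π 1 = 1
  have h1li : LinearIndepOn ℚ id ({(1 : ℂ)} : Set ℂ) :=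
    (linearIndepOn_singleton_iff ℚ).mpr one_ne_zero
  let b := Module.Basis.extend h1li
  have h1mem : (1 : ℂ) ∈ h1li.extend (Set.subset_univ _) :=
    h1li.subset_extend _ (Set.mem_singleton 1)
  let π : ℂ →ₗ[ℚ] ℚ := b.coord ⟨1, h1mem⟩
  have hπ1 : π (1 : ℂ) = 1 := by
    have hb1 : b ⟨1, h1mem⟩ = (1 : ℂ) := Module.Basis.extend_apply_self h1li ⟨1, h1mem⟩
    simp only [π, Module.Basis.coord_apply]
    have h2 : b.repr (b ⟨1, h1mem⟩) ⟨1, h1mem⟩ = b.repr 1 ⟨1, h1mem⟩ :=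
      congrArg (fun z => b.repr z ⟨1, h1mem⟩) hb1
    rw [← h2, Module.Basis.repr_self]
    simp
  -- integrality of each variable modulo I
  have hint : ∀ j : Fin n, IsIntegral ℚ (Ideal.Quotient.mk I (MvPolynomial.X j)) := by
    intro j
    set S : Finset ℂ := (hZfin.image fun x => x j).toFinset with hS
    set P : Polynomial ℂ := ∏ s ∈ S, (Polynomial.X - Polynomial.C s) with hP
    have hPmonic : P.Monic := Polynomial.monic_prod_of_monic _ _
      fun s _ => Polynomial.monic_X_sub_C s
    set g : MvPolynomial (Fin n) ℂ :=
      Polynomial.aeval (MvPolynomial.X j : MvPolynomial (Fin n) ℂ) P with hg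
    have hgvan : g ∈ MvPolynomial.vanishingIdeal ℂ (MvPolynomial.zeroLocus ℂ J) := by
      rw [MvPolynomial.mem_vanishingIdeal_iff]
      intro x hx
      have hxj : x j ∈ S := by
        rw [hS, Set.Finite.mem_toFinset]
        exact ⟨x, hx, rfl⟩
      have : MvPolynomial.aeval x g = 0 := by
        rw [hg, ← Polynomial.aeval_algHom_apply (MvPolynomial.aeval x) _ P]
        simp only [MvPolynomial.aeval_X]
        rw [hP, map_prod]
        apply Finset.prod_eq_zero hxj
        simp
      rw [MvPolynomial.aeval_def] at this
      exact this
    rw [MvPolynomial.vanishingIdeal_zeroLocus_eq_radical] at hgvan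
    obtain ⟨N, hN⟩ := Ideal.mem_radical_iff.mp hgvan
    rw [hJ, Ideal.mem_span_range_iff_exists_fun] at hN
    obtain ⟨c, hc⟩ := hN
    -- project the identity to ℚ
    have hproj : projC π (g ^ N) ∈ I := by
      rw [← hc]
      have : projC π (∑ i, c i * MvPolynomial.pderiv i F) =
          ∑ i, projC π (c i) * MvPolynomial.pderiv i f := by
        rw [show (∑ i, c i * MvPolynomial.pderiv i F) =
            ∑ i, c i * MvPolynomial.map (algebraMap ℚ ℂ) (MvPolynomial.pderiv i f) from by
          simp [hF, MvPolynomial.pderiv_map]]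
        induction (Finset.univ : Finset (Fin n)) using Finset.induction_on with
        | empty =>
            simp only [Finset.sum_empty]
            apply MvPolynomial.ext
            intro m
            simp [coeff_projC]
        | insert _ _ hnotmem ih =>
            rw [Finset.sum_insert hnotmem, Finset.sum_insert hnotmem, projC_add, ih,
              projC_mul_map]
      rw [this]
      exact Ideal.sum_mem _ fun i _ => Ideal.mul_mem_left _ _
        (Ideal.subset_span ⟨i, rfl⟩)
    -- the monic rational annihilating polynomial
    set Q : Polynomial ℚ := projP π (P ^ N) with hQ
    have hPNmonic : (P ^ N).Monic := hPmonic.pow N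
    have hQmonic : Q.Monic := by
      apply Polynomial.monic_of_natDegree_le_of_coeff_eq_one (P ^ N).natDegree
      · apply Polynomial.natDegree_le_iff_coeff_eq_zero.mpr
        intro k hk
        rw [hQ, coeff_projP, Polynomial.coeff_eq_zero_of_natDegree_lt hk, map_zero]
      · rw [hQ, coeff_projP, hPNmonic.coeff_natDegree, hπ1]
    refine ⟨Q, hQmonic, ?_⟩
    have hgN : g ^ N = Polynomial.aeval (MvPolynomial.X j : MvPolynomial (Fin n) ℂ) (P ^ N) := by
      rw [hg, map_pow]
    have hcl : projC π (g ^ N) =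
        Polynomial.aeval (MvPolynomial.X j : MvPolynomial (Fin n) ℚ) Q := by
      rw [hgN, projC_aeval_X, hQ]
    show Polynomial.aeval ((Ideal.Quotient.mkₐ ℚ I) (MvPolynomial.X j)) Q = 0
    rw [Polynomial.aeval_algHom_apply (Ideal.Quotient.mkₐ ℚ I) _ Q, ← hcl]
    show Ideal.Quotient.mk I (projC π (g ^ N)) = 0
    exact Ideal.Quotient.eq_zero_iff_mem.mpr hproj
  -- conclude finiteness
  haveI hFT : Algebra.FiniteType ℚ (MvPolynomial (Fin n) ℚ ⧸ I) :=
    Algebra.FiniteType.of_surjective (Ideal.Quotient.mkₐ ℚ I)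
      (Ideal.Quotient.mkₐ_surjective ℚ I)
  haveI hInt : Algebra.IsIntegral ℚ (MvPolynomial (Fin n) ℚ ⧸ I) := by
    constructor
    intro x
    have hadj : Algebra.adjoin ℚ
        (Set.range fun j => Ideal.Quotient.mk I (MvPolynomial.X j)) = ⊤ := by
      have : (Set.range fun j : Fin n => Ideal.Quotient.mk I (MvPolynomial.X j)) =
          (Ideal.Quotient.mkₐ ℚ I) '' (Set.range (MvPolynomial.X : Fin n → _)) := by
        rw [← Set.range_comp]
        rfl
      rw [this, ← AlgHom.map_adjoin, MvPolynomial.adjoin_range_X, Algebra.map_top,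
        AlgHom.range_eq_top]
      exact Ideal.Quotient.mkₐ_surjective ℚ I
    have hle : Algebra.adjoin ℚ
        (Set.range fun j => Ideal.Quotient.mk I (MvPolynomial.X j)) ≤
        integralClosure ℚ (MvPolynomial (Fin n) ℚ ⧸ I) := by
      apply Algebra.adjoin_le
      rintro _ ⟨j, rfl⟩
      exact hint j
    rw [hadj] at hle
    exact hle (Algebra.mem_top)
  exact Algebra.IsIntegral.finite

end Finiteness

section SosTransfer

lemma IsSumSq.map' {R S : Type*} [CommRing R] [CommRing S] (φ : R →+* S) {x : R}
    (h : IsSumSq x) : IsSumSq (φ x) := by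
  induction h with
  | zero => simpa using IsSumSq.zero
  | @sq_add a S pS ih =>
      rw [map_add, map_mul]
      exact IsSumSq.sq_add _ ih

lemma IsSumSq.pi_single {ι : Type*} [DecidableEq ι] {G : ι → Type*} [∀ i, CommRing (G i)]
    (i : ι) {x : G i} (h : IsSumSq x) : IsSumSq (Pi.single i x) := by
  induction h with
  | zero => simpa using IsSumSq.zero
  | @sq_add a S pS ih =>
      have : Pi.single i (a * a + S) = Pi.single i a * Pi.single i a + Pi.single i S := by
        rw [Pi.single_add, Pi.single_mul]
      rw [this]
      exact IsSumSq.sq_add _ ih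

lemma isSumSq_pi {ι : Type*} [Fintype ι] {G : ι → Type*} [∀ i, CommRing (G i)]
    {a : ∀ i, G i} (h : ∀ i, IsSumSq (a i)) : IsSumSq a := by
  classical
  have : a = ∑ i, Pi.single i (a i) := by
    funext j
    rw [Finset.sum_apply]
    exact (Fintype.sum_pi_single j a).symm
  rw [this]
  have : ∀ s : Finset ι, IsSumSq (∑ i ∈ s, Pi.single i (a i)) := by
    intro s
    induction s using Finset.induction_on with
    | empty => simpa using IsSumSq.zero
    | insert _ _ hnot ih =>
        rw [Finset.sum_insert hnot]
        exact ((h _).pi_single _).add ih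
  exact this Finset.univ

lemma IsSumSq.exists_fin {R : Type*} [CommRing R] {x : R} (h : IsSumSq x) :
    ∃ (s : ℕ) (q : Fin s → R), x = ∑ j, q j ^ 2 := by
  induction h with
  | zero => exact ⟨0, ![], by simp⟩
  | @sq_add a S pS ih =>
      obtain ⟨s, q, hq⟩ := ih
      refine ⟨s + 1, Fin.cons a q, ?_⟩
      rw [Fin.sum_univ_succ]
      simp only [Fin.cons_zero, Fin.cons_succ]
      rw [hq, pow_two]

end SosTransfer

section Forward

set_option maxHeartbeats 2000000 in
theorem forward_sos {n : ℕ} (f : MvPolynomial (Fin n) ℚ)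
    (hfin : {x : Fin n → ℂ | ∀ i, MvPolynomial.aeval x (MvPolynomial.pderiv i f) = 0}.Finite)
    (hrad : (Ideal.span (Set.range fun i => MvPolynomial.pderiv i f)).IsRadical)
    (hnn : ∀ x : Fin n → ℝ, 0 ≤ MvPolynomial.aeval x f) :
    ∃ (s : ℕ) (c : Fin s → ℚ) (q : Fin s → MvPolynomial (Fin n) ℚ)
      (φ : Fin n → MvPolynomial (Fin n) ℚ),
      (∀ j, 0 < c j) ∧
      f = (∑ j, MvPolynomial.C (c j) * (q j) ^ 2) + ∑ i, φ i * MvPolynomial.pderiv i f := by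
  classical
  set I : Ideal (MvPolynomial (Fin n) ℚ) :=
    Ideal.span (Set.range fun i => MvPolynomial.pderiv i f) with hI
  haveI hfinB : Module.Finite ℚ (MvPolynomial (Fin n) ℚ ⧸ I) :=
    moduleFinite_of_gradient_finite f hfin
  haveI hred : IsReduced (MvPolynomial (Fin n) ℚ ⧸ I) :=
    (Ideal.isRadical_iff_quotient_reduced I).mp hrad
  haveI hartQ : IsArtinian ℚ (MvPolynomial (Fin n) ℚ ⧸ I) := inferInstance
  haveI hart : IsArtinianRing (MvPolynomial (Fin n) ℚ ⧸ I) :=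
    isArtinian_of_tower ℚ hartQ
  haveI hfinmax : Finite (MaximalSpectrum (MvPolynomial (Fin n) ℚ ⧸ I)) :=
    inferInstance
  haveI : Fintype (MaximalSpectrum (MvPolynomial (Fin n) ℚ ⧸ I)) :=
    Fintype.ofFinite _
  letI instF : ∀ J : MaximalSpectrum (MvPolynomial (Fin n) ℚ ⧸ I),
      Field ((MvPolynomial (Fin n) ℚ ⧸ I) ⧸ J.asIdeal) := fun J =>
    have : J.asIdeal.IsMaximal := J.isMaximal
    Ideal.Quotient.field J.asIdeal
  let e := IsArtinianRing.equivPi (MvPolynomial (Fin n) ℚ ⧸ I)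
  have hcomp : ∀ J, IsSumSq (e (Ideal.Quotient.mk I f) J) := by
    intro J
    haveI hJmax : J.asIdeal.IsMaximal := J.isMaximal
    haveI : Module.Finite ℚ ((MvPolynomial (Fin n) ℚ ⧸ I) ⧸ J.asIdeal) :=
      Module.Finite.of_surjective (Ideal.Quotient.mkₐ ℚ J.asIdeal).toLinearMap
        (Ideal.Quotient.mkₐ_surjective ℚ J.asIdeal)
    by_contra hnot
    obtain ⟨σ, hσ⟩ := exists_ringHom_neg_of_not_isSumSq hnot
    let ψ : (MvPolynomial (Fin n) ℚ ⧸ I) →+* ℝ :=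
      σ.comp ((Pi.evalRingHom _ J).comp e.toRingHom)
    let χ : MvPolynomial (Fin n) ℚ →+* ℝ := ψ.comp (Ideal.Quotient.mk I)
    let v : Fin n → ℝ := fun j => χ (MvPolynomial.X j)
    have hχ : χ = (MvPolynomial.aeval v : MvPolynomial (Fin n) ℚ →ₐ[ℚ] ℝ).toRingHom := by
      apply MvPolynomial.ringHom_ext
      · intro q
        have h1 : χ (MvPolynomial.C q) = (q : ℝ) :=
          eq_ratCast (χ.comp (MvPolynomial.C : ℚ →+* MvPolynomial (Fin n) ℚ)) q
        have h2 : (MvPolynomial.aeval v) (MvPolynomial.C q) = (q : ℝ) := by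
          rw [MvPolynomial.aeval_C]
          exact eq_ratCast (algebraMap ℚ ℝ) q
        rw [h1]
        exact h2.symm
      · intro i
        simp only [AlgHom.toRingHom_eq_coe, RingHom.coe_coe, MvPolynomial.aeval_X]
        rfl
    have h3 : σ (e (Ideal.Quotient.mk I f) J) = χ f := rfl
    have hval : σ (e (Ideal.Quotient.mk I f) J) = MvPolynomial.aeval v f :=
      h3.trans (DFunLike.congr_fun hχ f)
    have := hnn v
    rw [← hval] at this
    linarith
  have hsosPi : IsSumSq (e (Ideal.Quotient.mk I f)) := isSumSq_pi hcomp
  have hsos : IsSumSq (Ideal.Quotient.mk I f) := by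
    have h4 := hsosPi.map' e.symm.toRingHom
    simpa using h4
  obtain ⟨s, qb, hqb⟩ := hsos.exists_fin
  choose Q hQ using fun j => Ideal.Quotient.mk_surjective (qb j)
  have hmem : f - ∑ j, Q j ^ 2 ∈ I := by
    rw [← Ideal.Quotient.eq_zero_iff_mem, map_sub, map_sum]
    simp_rw [map_pow, hQ]
    rw [← hqb]
    exact sub_self _
  rw [hI, Ideal.mem_span_range_iff_exists_fun] at hmem
  obtain ⟨φ, hφ⟩ := hmem
  refine ⟨s, fun _ => 1, Q, φ, fun _ => one_pos, ?_⟩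
  have hC1 : (∑ j, MvPolynomial.C (1 : ℚ) * Q j ^ 2) = ∑ j, Q j ^ 2 := by simp
  rw [hC1, hφ]
  ring

end Forward

open MvPolynomial Polynomial

noncomputable section

variable {n : ℕ}

/-- Chain rule: derivative of the polynomial obtained by substituting univariate
polynomials into a multivariate polynomial. -/
lemma derivative_aeval_eq (σ : Fin n → Polynomial ℝ) (f : MvPolynomial (Fin n) ℚ) :
    Polynomial.derivative (MvPolynomial.aeval σ f) =
      ∑ j, MvPolynomial.aeval σ (MvPolynomial.pderiv j f) * Polynomial.derivative (σ j) := by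
  induction f using MvPolynomial.induction_on with
  | C a => simp
  | add p q hp hq => simp [hp, hq, Finset.sum_add_distrib, add_mul]
  | mul_X p i hp =>
      simp only [map_mul, map_add, MvPolynomial.aeval_X, Polynomial.derivative_mul, hp,
        MvPolynomial.pderiv_mul, MvPolynomial.pderiv_X]
      have key : ∀ x : Fin n,
          ((MvPolynomial.aeval σ) ((pderiv x) p) * σ i +
            (MvPolynomial.aeval σ) p * (MvPolynomial.aeval σ) ((Pi.single x 1 : Fin n → MvPolynomial (Fin n) ℚ) i)) *
            Polynomial.derivative (σ x) =
          ((MvPolynomial.aeval σ) ((pderiv x) p) * Polynomial.derivative (σ x)) * σ i +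
            (MvPolynomial.aeval σ) p *
              ((MvPolynomial.aeval σ) ((Pi.single x 1 : Fin n → MvPolynomial (Fin n) ℚ) i) * Polynomial.derivative (σ x)) :=
        fun x => by ring
      rw [Finset.sum_congr rfl fun x _ => key x, Finset.sum_add_distrib, ← Finset.sum_mul,
        ← Finset.mul_sum]
      congr 1
      rw [Finset.sum_eq_single i]
      · simp
      · intro j _ hj
        simp [Pi.single_apply, hj]
      · simp

lemma eval_aeval_mv (σ : Fin n → Polynomial ℝ) (t : ℝ) (f : MvPolynomial (Fin n) ℚ) :
    Polynomial.eval t (MvPolynomial.aeval σ f) =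
      MvPolynomial.aeval (fun j => (σ j).eval t) f := by
  induction f using MvPolynomial.induction_on with
  | C a => simp [MvPolynomial.algebraMap_eq]
  | add p q hp hq => simp [hp, hq]
  | mul_X p i hp => simp [hp]

lemma critical_point (f : MvPolynomial (Fin n) ℚ) (xstar : Fin n → ℝ)
    (hmin : ∀ x : Fin n → ℝ, MvPolynomial.aeval xstar f ≤ MvPolynomial.aeval x f) (i : Fin n) :
    MvPolynomial.aeval xstar (MvPolynomial.pderiv i f) = 0 := by
  set σ : Fin n → Polynomial ℝ :=
    fun j => Polynomial.C (xstar j) + if j = i then Polynomial.X else 0 with hσ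
  have hσ0 : (fun j => (σ j).eval 0) = xstar := by
    funext j; by_cases h : j = i <;> simp [hσ, h]
  have hmin0 : IsLocalMin (fun t => (MvPolynomial.aeval σ f).eval t) 0 := by
    refine Filter.Eventually.of_forall fun t => ?_
    simp only [eval_aeval_mv, hσ0]
    exact hmin _
  have hd := hmin0.deriv_eq_zero
  rw [Polynomial.deriv] at hd
  have hder : Polynomial.derivative (MvPolynomial.aeval σ f) =
      MvPolynomial.aeval σ (MvPolynomial.pderiv i f) := by
    rw [derivative_aeval_eq]
    rw [Finset.sum_eq_single i]
    · simp [hσ]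
    · intro j _ hj
      simp [hσ, hj]
    · simp
  rw [hder, eval_aeval_mv, hσ0] at hd
  exact hd

end

/-- Main theorem: for f ∈ ℚ[x₁,…,xₙ] attaining its infimum over ℝⁿ, with zero-dimensional
radical gradient ideal, f is non-negative on ℝⁿ iff f is a weighted SOS of polynomials with
rational coefficients modulo the gradient ideal. -/
theorem nonneg_iff_sos_mod_gradient (n : ℕ) (f : MvPolynomial (Fin n) ℚ)
    (hinf : ∃ xstar : Fin n → ℝ,
      ∀ x : Fin n → ℝ, MvPolynomial.aeval xstar f ≤ MvPolynomial.aeval x f)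
    (hfin : {x : Fin n → ℂ | ∀ i, MvPolynomial.aeval x (MvPolynomial.pderiv i f) = 0}.Finite)
    (hrad : (Ideal.span (Set.range fun i => MvPolynomial.pderiv i f)).IsRadical) :
    (∀ x : Fin n → ℝ, 0 ≤ MvPolynomial.aeval x f) ↔
    ∃ (s : ℕ) (c : Fin s → ℚ) (q : Fin s → MvPolynomial (Fin n) ℚ)
      (φ : Fin n → MvPolynomial (Fin n) ℚ),
      (∀ j, 0 < c j) ∧
      f = (∑ j, MvPolynomial.C (c j) * (q j) ^ 2) + ∑ i, φ i * MvPolynomial.pderiv i f := by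
  obtain ⟨xstar, hstar⟩ := hinf
  have hcrit : ∀ i, MvPolynomial.aeval xstar (MvPolynomial.pderiv i f) = 0 :=
    critical_point f xstar hstar
  constructor
  · intro hnn
    exact forward_sos f hfin hrad hnn
  · rintro ⟨s, c, q, φ, hc, hrep⟩ x
    have h0 : (0 : ℝ) ≤ MvPolynomial.aeval xstar f := by
      rw [hrep]
      simp only [map_add, map_sum, map_mul, map_pow]
      have h2 : (∑ i, MvPolynomial.aeval xstar (φ i) *
          MvPolynomial.aeval xstar (MvPolynomial.pderiv i f)) = 0 := by
        refine Finset.sum_eq_zero fun i _ => ?_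
        rw [hcrit i, mul_zero]
      rw [h2, add_zero]
      refine Finset.sum_nonneg fun j _ => mul_nonneg ?_ (sq_nonneg _)
      have : MvPolynomial.aeval xstar (MvPolynomial.C (c j)) = algebraMap ℚ ℝ (c j) := by
        simp [MvPolynomial.algebraMap_eq]
      rw [this]
      have h3 : algebraMap ℚ ℝ (c j) = ((c j : ℚ) : ℝ) := by
        simp [Algebra.algebraMap_self]
      rw [h3]
      exact le_of_lt (by exact_mod_cast hc j)
    exact le_trans h0 (hstar x)
end

section
/- The dehomogenized Robinson polynomial f_R = x₁⁶ + x₂⁶ − x₁⁴x₂² + 3x₁²x₂² − x₁²x₂⁴ − x₁⁴ − x₂⁴ − x₁² − x₂² + 1 is non-negative on ℝ², but is not a sum of squares of polynomials in ℝ[x₁,x₂]. -/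
open MvPolynomial

noncomputable def μ (m n : ℕ) : Fin 2 →₀ ℕ := Finsupp.single 0 m + Finsupp.single 1 n

lemma μ_apply0 (m n : ℕ) : μ m n 0 = m := by simp [μ, Finsupp.single_apply]
lemma μ_apply1 (m n : ℕ) : μ m n 1 = n := by simp [μ, Finsupp.single_apply]

lemma deg2 (α : Fin 2 →₀ ℕ) : α.degree = α 0 + α 1 := by
  show ∑ i ∈ α.support, α i = α 0 + α 1
  rw [Finset.sum_subset (Finset.subset_univ α.support)]
  · exact Fin.sum_univ_two α
  · intro x _ hx
    simpa using Finsupp.notMem_support_iff.mp hx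

lemma finsupp_fin2 (α : Fin 2 →₀ ℕ) : α = μ (α 0) (α 1) := by
  ext i
  fin_cases i
  · simp [μ_apply0]
  · simp [μ_apply1]

lemma μ_inj {a b c d : ℕ} (h : μ a b = μ c d) : a = c ∧ b = d := by
  constructor
  · have := congrArg (fun f => f 0) h; simpa [μ_apply0] using this
  · have := congrArg (fun f => f 1) h; simpa [μ_apply1] using this

lemma μ_degree (m n : ℕ) : (μ m n).degree = m + n := by
  rw [deg2, μ_apply0, μ_apply1]

lemma sq_homog (p : MvPolynomial (Fin 2) ℝ) (d : ℕ) (hp : p.totalDegree ≤ d) :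
    homogeneousComponent (2*d) (p^2) = (homogeneousComponent d p)^2 := by
  classical
  have hc : ∀ (β : Fin 2 →₀ ℕ), d < β.degree → coeff β p = 0 := by
    intro β hβ
    apply coeff_eq_zero_of_totalDegree_lt
    calc p.totalDegree ≤ d := hp
    _ < β.degree := hβ
  ext α
  rw [coeff_homogeneousComponent, pow_two, pow_two, coeff_mul, coeff_mul]
  by_cases h : α.degree = 2*d
  · rw [if_pos h]
    apply Finset.sum_congr rfl
    rintro ⟨β, γ⟩ hm
    rw [Finset.HasAntidiagonal.mem_antidiagonal] at hm
    have hsum : β.degree + γ.degree = 2*d := by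
      rw [← h, ← hm]; simp [deg2, Finsupp.add_apply]; ring
    by_cases hβ : β.degree = d
    · have hγ : γ.degree = d := by omega
      rw [coeff_homogeneousComponent, coeff_homogeneousComponent, if_pos hβ, if_pos hγ]
    · rcases Nat.lt_or_ge d β.degree with hlt | hge
      · rw [hc β hlt, coeff_homogeneousComponent, if_neg hβ, zero_mul, zero_mul]
      · have hγ : d < γ.degree := by omega
        rw [hc γ hγ, coeff_homogeneousComponent (d := γ), if_neg (by omega), mul_zero, mul_zero]
  · rw [if_neg h]
    symm
    apply Finset.sum_eq_zero
    rintro ⟨β, γ⟩ hm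
    rw [Finset.HasAntidiagonal.mem_antidiagonal] at hm
    have hsum : β.degree + γ.degree = α.degree := by
      rw [← hm]; simp [deg2, Finsupp.add_apply]; ring
    by_cases hβ : β.degree = d
    · rw [coeff_homogeneousComponent (d := γ), if_neg (by omega), mul_zero]
    · rw [coeff_homogeneousComponent, if_neg hβ, zero_mul]

lemma sumsq_zero {s : ℕ} (h : Fin s → MvPolynomial (Fin 2) ℝ) (hz : ∑ i, (h i)^2 = 0) :
    ∀ i, h i = 0 := by
  intro i
  apply MvPolynomial.funext
  intro x
  have hx : ∑ j, (eval x (h j))^2 = 0 := by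
    have := congrArg (eval x) hz
    simpa [eval_sum] using this
  have hnn : ∀ j ∈ Finset.univ, (0:ℝ) ≤ (eval x (h j))^2 := fun j _ => sq_nonneg _
  have := (Finset.sum_eq_zero_iff_of_nonneg hnn).mp hx i (Finset.mem_univ i)
  simpa using pow_eq_zero_iff (n := 2) (by norm_num) |>.mp this

lemma descent {s : ℕ} (F : MvPolynomial (Fin 2) ℝ) (hF : F.totalDegree ≤ 6)
    (q : Fin s → MvPolynomial (Fin 2) ℝ) (hf : F = ∑ i, (q i)^2)
    (n : ℕ) (hn : 4 ≤ n) (hq : ∀ i, (q i).totalDegree ≤ n) :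
    ∀ i, (q i).totalDegree ≤ n - 1 := by
  have h0 : homogeneousComponent (2*n) F = 0 :=
    homogeneousComponent_eq_zero (2*n) F (lt_of_le_of_lt hF (by omega))
  have hs : (0 : MvPolynomial (Fin 2) ℝ) = ∑ i, (homogeneousComponent n (q i))^2 := by
    rw [← h0, hf, map_sum]
    exact Finset.sum_congr rfl fun i _ => sq_homog (q i) n (hq i)
  have hz := sumsq_zero (fun i => homogeneousComponent n (q i)) hs.symm
  intro i
  apply Finset.sup_le
  intro α hα
  have h1 : (α.sum fun _ e => e) ≤ n := le_trans (le_totalDegree hα) (hq i)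
  by_cases h2 : α.degree = n
  · exfalso
    have hco : coeff α (homogeneousComponent n (q i)) = coeff α (q i) := by
      rw [coeff_homogeneousComponent, if_pos h2]
    have hzi := hz i
    rw [hzi] at hco
    exact mem_support_iff.mp hα (by simpa using hco.symm)
  · have : (α.sum fun _ e => e) = α.degree := rfl
    omega

lemma repr3 (p : MvPolynomial (Fin 2) ℝ) (hp : p.totalDegree ≤ 3) (a b : ℝ) :
    eval ![a, b] p = ∑ m ∈ Finset.range 4, ∑ n ∈ Finset.range 4,
      coeff (μ m n) p * (a ^ m * b ^ n) := by
  classical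
  have hsub : p.support ⊆ (Finset.range 4 ×ˢ Finset.range 4).image (fun mn => μ mn.1 mn.2) := by
    intro α hα
    have h1 : α.degree ≤ 3 := le_trans (le_totalDegree hα) hp
    rw [deg2] at h1
    refine Finset.mem_image.mpr ⟨(α 0, α 1), ?_, (finsupp_fin2 α).symm⟩
    simp [Finset.mem_product]
    omega
  rw [eval_eq' ![a,b] p, Finset.sum_subset hsub ?hzero]
  case hzero =>
    intro α _ hα
    rw [notMem_support_iff.mp hα, zero_mul]
  rw [Finset.sum_image (fun x _ y _ h => by
    rcases μ_inj h with ⟨h1, h2⟩; exact Prod.ext h1 h2)]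
  rw [Finset.sum_product]
  apply Finset.sum_congr rfl; intro m _
  apply Finset.sum_congr rfl; intro n _
  congr 1
  rw [Fin.prod_univ_two]
  simp [μ_apply0, μ_apply1]

lemma vandermonde7 (S6 S5 S4 S3 S2 S1 S0 : ℝ)
    (h : ∀ t : ℝ, S6*t^6 + S5*t^5 + S4*t^4 + S3*t^3 + S2*t^2 + S1*t + S0
      = t^4 - 2*t^2 + 1) : S6 = 0 := by
  have h0 := h 0
  have h1 := h 1
  have h2 := h (-1)
  have h3 := h 2
  have h4 := h (-2)
  have h5 := h 3
  have h6 := h (-3)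
  norm_num at h0 h1 h2 h3 h4 h5 h6
  linarith

lemma cubic_line_sq {s : ℕ} (p0 p1 p2 p3 : Fin s → ℝ)
    (h : ∀ t : ℝ, ∑ i, (p0 i + p1 i * t + p2 i * t^2 + p3 i * t^3)^2
      = t^4 - 2*t^2 + 1) :
    ∀ i, p3 i = 0 := by
  have key : ∀ t : ℝ,
      (∑ i, (p3 i)^2)*t^6 + (∑ i, 2*(p2 i)*(p3 i))*t^5
      + (∑ i, ((p2 i)^2 + 2*(p1 i)*(p3 i)))*t^4
      + (∑ i, (2*(p0 i)*(p3 i) + 2*(p1 i)*(p2 i)))*t^3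
      + (∑ i, ((p1 i)^2 + 2*(p0 i)*(p2 i)))*t^2
      + (∑ i, 2*(p0 i)*(p1 i))*t + (∑ i, (p0 i)^2)
      = t^4 - 2*t^2 + 1 := by
    intro t
    rw [← h t]
    simp only [Finset.sum_mul, ← Finset.sum_add_distrib]
    apply Finset.sum_congr rfl
    intro i _
    ring
  have hS := vandermonde7 _ _ _ _ _ _ _ key
  intro i
  have hnn : ∀ j ∈ Finset.univ, (0:ℝ) ≤ (p3 j)^2 := fun j _ => sq_nonneg _
  have := (Finset.sum_eq_zero_iff_of_nonneg hnn).mp hS i (Finset.mem_univ i)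
  exact pow_eq_zero_iff (n := 2) (by norm_num) |>.mp this

set_option maxHeartbeats 1000000 in
open MvPolynomial in
/-- The dehomogenized Robinson polynomial is non-negative on ℝ² but is not a sum of
squares of polynomials in ℝ[x₁,x₂]. -/
theorem robinson_nonneg_not_sos :
    (∀ x : Fin 2 → ℝ, 0 ≤ MvPolynomial.eval x
      ((X 0) ^ 6 + (X 1) ^ 6 - (X 0) ^ 4 * (X 1) ^ 2 + 3 * (X 0) ^ 2 * (X 1) ^ 2
        - (X 0) ^ 2 * (X 1) ^ 4 - (X 0) ^ 4 - (X 1) ^ 4 - (X 0) ^ 2 - (X 1) ^ 2 + 1 :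
        MvPolynomial (Fin 2) ℝ)) ∧
    ¬ ∃ (s : ℕ) (q : Fin s → MvPolynomial (Fin 2) ℝ),
      ((X 0) ^ 6 + (X 1) ^ 6 - (X 0) ^ 4 * (X 1) ^ 2 + 3 * (X 0) ^ 2 * (X 1) ^ 2
        - (X 0) ^ 2 * (X 1) ^ 4 - (X 0) ^ 4 - (X 1) ^ 4 - (X 0) ^ 2 - (X 1) ^ 2 + 1 :
        MvPolynomial (Fin 2) ℝ) = ∑ i, (q i) ^ 2 := by
  constructor
  · intro x
    simp only [map_add, map_sub, map_mul, map_pow, map_one, map_ofNat, eval_X]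
    set a := x 0
    set b := x 1
    nlinarith [sq_nonneg (a^2-1), sq_nonneg (b^2-1), sq_nonneg (a^2-b^2), sq_nonneg (a*b),
      sq_nonneg (a^2+b^2-1), sq_nonneg (a^2*b-b), sq_nonneg (a*b^2-a), sq_nonneg (a*(a^2-1)),
      sq_nonneg (b*(b^2-1)), sq_nonneg a, sq_nonneg b]
  · rintro ⟨s, q, hq⟩
    -- degree bound
    have hF6 : ((X 0) ^ 6 + (X 1) ^ 6 - (X 0) ^ 4 * (X 1) ^ 2 + 3 * (X 0) ^ 2 * (X 1) ^ 2
        - (X 0) ^ 2 * (X 1) ^ 4 - (X 0) ^ 4 - (X 1) ^ 4 - (X 0) ^ 2 - (X 1) ^ 2 + 1 :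
        MvPolynomial (Fin 2) ℝ).totalDegree ≤ 6 := by
      have hadd : ∀ {p q : MvPolynomial (Fin 2) ℝ} {n}, p.totalDegree ≤ n → q.totalDegree ≤ n →
          (p + q).totalDegree ≤ n := fun hp hq => (totalDegree_add _ _).trans (max_le hp hq)
      have hneg : ∀ {p : MvPolynomial (Fin 2) ℝ} {n}, p.totalDegree ≤ n →
          (-p).totalDegree ≤ n := by
        intro p n hp; rwa [totalDegree_neg]
      have hsub : ∀ {p q : MvPolynomial (Fin 2) ℝ} {n}, p.totalDegree ≤ n → q.totalDegree ≤ n →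
          (p - q).totalDegree ≤ n := by
        intro p q n hp hq; rw [sub_eq_add_neg]; exact hadd hp (hneg hq)
      have hmul : ∀ {p q : MvPolynomial (Fin 2) ℝ} {m n}, p.totalDegree ≤ m →
          q.totalDegree ≤ n → (p * q).totalDegree ≤ m + n :=
        fun hp hq => (totalDegree_mul _ _).trans (add_le_add hp hq)
      have hX : ∀ (i : Fin 2) (n m : ℕ), n ≤ m →
          (X i ^ n : MvPolynomial (Fin 2) ℝ).totalDegree ≤ m :=
        fun i n m h => le_trans (le_of_eq (totalDegree_X_pow i n)) h
      have h3 : (3 : MvPolynomial (Fin 2) ℝ).totalDegree ≤ 0 := by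
        rw [show (3 : MvPolynomial (Fin 2) ℝ) = C 3 from
          (map_ofNat (C : ℝ →+* MvPolynomial (Fin 2) ℝ) 3).symm]
        simp [totalDegree_C]
      apply hadd
      apply hsub
      apply hsub
      apply hsub
      apply hsub
      apply hsub
      apply hadd
      apply hsub
      apply hadd
      · exact hX _ _ _ le_rfl
      · exact hX _ _ _ le_rfl
      · exact le_trans (hmul (hX 0 4 4 le_rfl) (hX 1 2 2 le_rfl)) le_rfl
      · exact le_trans (hmul (hmul h3 (hX 0 2 2 le_rfl)) (hX 1 2 2 le_rfl)) (by norm_num)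
      · exact le_trans (hmul (hX 0 2 2 le_rfl) (hX 1 4 4 le_rfl)) le_rfl
      · exact hX _ _ _ (by norm_num)
      · exact hX _ _ _ (by norm_num)
      · exact hX _ _ _ (by norm_num)
      · exact hX _ _ _ (by norm_num)
      · simp [totalDegree_one]
    have hdeg3 : ∀ i, (q i).totalDegree ≤ 3 := by
      have claim : ∀ k, (∀ i, (q i).totalDegree ≤ 3 + k) → ∀ i, (q i).totalDegree ≤ 3 := by
        intro k
        induction k with
        | zero => simp
        | succ k ih =>
          intro h
          apply ih
          intro i
          have := descent _ hF6 q hq (3+k+1) (by omega) h i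
          omega
      exact claim (Finset.univ.sup fun i => (q i).totalDegree)
        (fun i => le_trans (Finset.le_sup (f := fun i => (q i).totalDegree)
          (Finset.mem_univ i)) (by omega))
    -- vanishing of high coefficients
    have hvan : ∀ (i : Fin s) (m n : ℕ), 4 ≤ m + n → coeff (μ m n) (q i) = 0 := by
      intro i m n h
      apply coeff_eq_zero_of_totalDegree_lt
      show (q i).totalDegree < (μ m n).degree
      rw [μ_degree]
      have := hdeg3 i
      omega
    -- explicit representation
    have hrep : ∀ (i : Fin s) (a b : ℝ), eval ![a,b] (q i) =
        coeff (μ 0 0) (q i) + coeff (μ 1 0) (q i) * a + coeff (μ 0 1) (q i) * b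
        + coeff (μ 2 0) (q i) * a^2 + coeff (μ 1 1) (q i) * (a*b) + coeff (μ 0 2) (q i) * b^2
        + coeff (μ 3 0) (q i) * a^3 + coeff (μ 2 1) (q i) * (a^2*b)
        + coeff (μ 1 2) (q i) * (a*b^2) + coeff (μ 0 3) (q i) * b^3 := by
      intro i a b
      rw [repr3 (q i) (hdeg3 i) a b]
      simp only [Finset.sum_range_succ, Finset.sum_range_zero]
      rw [hvan i 1 3 (by norm_num), hvan i 2 2 (by norm_num), hvan i 2 3 (by norm_num),
        hvan i 3 1 (by norm_num), hvan i 3 2 (by norm_num), hvan i 3 3 (by norm_num)]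
      ring
    -- the functional identity
    have hP : ∀ a b : ℝ,
        (∑ i, (coeff (μ 0 0) (q i) + coeff (μ 1 0) (q i) * a + coeff (μ 0 1) (q i) * b
        + coeff (μ 2 0) (q i) * a^2 + coeff (μ 1 1) (q i) * (a*b) + coeff (μ 0 2) (q i) * b^2
        + coeff (μ 3 0) (q i) * a^3 + coeff (μ 2 1) (q i) * (a^2*b)
        + coeff (μ 1 2) (q i) * (a*b^2) + coeff (μ 0 3) (q i) * b^3)^2)
        = a^6 + b^6 - a^4*b^2 + 3*a^2*b^2 - a^2*b^4 - a^4 - b^4 - a^2 - b^2 + 1 := by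
      intro a b
      have h := congrArg (eval ![a,b]) hq
      simp only [map_add, map_sub, map_mul, map_pow, map_one, map_ofNat, eval_X, map_sum,
        Matrix.cons_val_zero, Matrix.cons_val_one, Matrix.head_cons] at h
      calc (∑ i, (coeff (μ 0 0) (q i) + coeff (μ 1 0) (q i) * a + coeff (μ 0 1) (q i) * b
        + coeff (μ 2 0) (q i) * a^2 + coeff (μ 1 1) (q i) * (a*b) + coeff (μ 0 2) (q i) * b^2
        + coeff (μ 3 0) (q i) * a^3 + coeff (μ 2 1) (q i) * (a^2*b)
        + coeff (μ 1 2) (q i) * (a*b^2) + coeff (μ 0 3) (q i) * b^3)^2)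
          = ∑ i, (eval ![a,b] (q i))^2 :=
            Finset.sum_congr rfl fun i _ => by rw [hrep i a b]
      _ = a^6 + b^6 - a^4*b^2 + 3*a^2*b^2 - a^2*b^4 - a^4 - b^4 - a^2 - b^2 + 1 := by
            linear_combination -h
    -- zeros of f kill each q i
    have hzero : ∀ a b : ℝ,
        a^6 + b^6 - a^4*b^2 + 3*a^2*b^2 - a^2*b^4 - a^4 - b^4 - a^2 - b^2 + 1 = 0 →
        ∀ i, coeff (μ 0 0) (q i) + coeff (μ 1 0) (q i) * a + coeff (μ 0 1) (q i) * b
        + coeff (μ 2 0) (q i) * a^2 + coeff (μ 1 1) (q i) * (a*b) + coeff (μ 0 2) (q i) * b^2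
        + coeff (μ 3 0) (q i) * a^3 + coeff (μ 2 1) (q i) * (a^2*b)
        + coeff (μ 1 2) (q i) * (a*b^2) + coeff (μ 0 3) (q i) * b^3 = 0 := by
      intro a b hab i
      have h := hP a b
      rw [hab] at h
      have hnn : ∀ j ∈ Finset.univ, (0:ℝ) ≤ (coeff (μ 0 0) (q j) + coeff (μ 1 0) (q j) * a
        + coeff (μ 0 1) (q j) * b
        + coeff (μ 2 0) (q j) * a^2 + coeff (μ 1 1) (q j) * (a*b) + coeff (μ 0 2) (q j) * b^2
        + coeff (μ 3 0) (q j) * a^3 + coeff (μ 2 1) (q j) * (a^2*b)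
        + coeff (μ 1 2) (q j) * (a*b^2) + coeff (μ 0 3) (q j) * b^3)^2 := fun j _ => sq_nonneg _
      have := (Finset.sum_eq_zero_iff_of_nonneg hnn).mp h i (Finset.mem_univ i)
      exact pow_eq_zero_iff (n := 2) (by norm_num) |>.mp this
    -- leading form conditions along the two diagonals
    have hdiag : ∀ i, coeff (μ 3 0) (q i) + coeff (μ 2 1) (q i) + coeff (μ 1 2) (q i)
        + coeff (μ 0 3) (q i) = 0 := by
      apply cubic_line_sq (fun i => coeff (μ 0 0) (q i))
        (fun i => coeff (μ 1 0) (q i) + coeff (μ 0 1) (q i))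
        (fun i => coeff (μ 2 0) (q i) + coeff (μ 1 1) (q i) + coeff (μ 0 2) (q i))
      intro t
      calc (∑ i, (coeff (μ 0 0) (q i) + (coeff (μ 1 0) (q i) + coeff (μ 0 1) (q i)) * t
            + (coeff (μ 2 0) (q i) + coeff (μ 1 1) (q i) + coeff (μ 0 2) (q i)) * t^2
            + (coeff (μ 3 0) (q i) + coeff (μ 2 1) (q i) + coeff (μ 1 2) (q i)
              + coeff (μ 0 3) (q i)) * t^3)^2)
          = ∑ i, (coeff (μ 0 0) (q i) + coeff (μ 1 0) (q i) * t + coeff (μ 0 1) (q i) * t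
        + coeff (μ 2 0) (q i) * t^2 + coeff (μ 1 1) (q i) * (t*t) + coeff (μ 0 2) (q i) * t^2
        + coeff (μ 3 0) (q i) * t^3 + coeff (μ 2 1) (q i) * (t^2*t)
        + coeff (μ 1 2) (q i) * (t*t^2) + coeff (μ 0 3) (q i) * t^3)^2 :=
            Finset.sum_congr rfl fun i _ => by ring
      _ = t^4 - 2*t^2 + 1 := by linear_combination hP t t
    have hadiag : ∀ i, coeff (μ 3 0) (q i) - coeff (μ 2 1) (q i) + coeff (μ 1 2) (q i)
        - coeff (μ 0 3) (q i) = 0 := by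
      have key := cubic_line_sq (fun i => coeff (μ 0 0) (q i))
        (fun i => coeff (μ 1 0) (q i) - coeff (μ 0 1) (q i))
        (fun i => coeff (μ 2 0) (q i) - coeff (μ 1 1) (q i) + coeff (μ 0 2) (q i))
        (fun i => coeff (μ 3 0) (q i) - coeff (μ 2 1) (q i) + coeff (μ 1 2) (q i)
          - coeff (μ 0 3) (q i)) ?_
      · exact key
      intro t
      calc (∑ i, (coeff (μ 0 0) (q i) + (coeff (μ 1 0) (q i) - coeff (μ 0 1) (q i)) * t
            + (coeff (μ 2 0) (q i) - coeff (μ 1 1) (q i) + coeff (μ 0 2) (q i)) * t^2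
            + (coeff (μ 3 0) (q i) - coeff (μ 2 1) (q i) + coeff (μ 1 2) (q i)
              - coeff (μ 0 3) (q i)) * t^3)^2)
          = ∑ i, (coeff (μ 0 0) (q i) + coeff (μ 1 0) (q i) * t + coeff (μ 0 1) (q i) * (-t)
        + coeff (μ 2 0) (q i) * t^2 + coeff (μ 1 1) (q i) * (t*(-t))
        + coeff (μ 0 2) (q i) * (-t)^2
        + coeff (μ 3 0) (q i) * t^3 + coeff (μ 2 1) (q i) * (t^2*(-t))
        + coeff (μ 1 2) (q i) * (t*(-t)^2) + coeff (μ 0 3) (q i) * (-t)^3)^2 :=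
            Finset.sum_congr rfl fun i _ => by ring
      _ = t^4 - 2*t^2 + 1 := by linear_combination hP t (-t)
    -- each q i vanishes identically
    have hqz : ∀ (i : Fin s),
        coeff (μ 0 0) (q i) = 0 ∧ coeff (μ 1 0) (q i) = 0 ∧ coeff (μ 0 1) (q i) = 0 ∧
        coeff (μ 2 0) (q i) = 0 ∧ coeff (μ 1 1) (q i) = 0 ∧ coeff (μ 0 2) (q i) = 0 ∧
        coeff (μ 3 0) (q i) = 0 ∧ coeff (μ 2 1) (q i) = 0 ∧ coeff (μ 1 2) (q i) = 0 ∧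
        coeff (μ 0 3) (q i) = 0 := by
      intro i
      have e1 := hzero 1 0 (by norm_num) i
      have e2 := hzero (-1) 0 (by norm_num) i
      have e3 := hzero 0 1 (by norm_num) i
      have e4 := hzero 0 (-1) (by norm_num) i
      have e5 := hzero 1 1 (by norm_num) i
      have e6 := hzero 1 (-1) (by norm_num) i
      have e7 := hzero (-1) 1 (by norm_num) i
      have e8 := hzero (-1) (-1) (by norm_num) i
      have e9 := hdiag i
      have e10 := hadiag i
      norm_num at e1 e2 e3 e4 e5 e6 e7 e8
      set a00 := coeff (μ 0 0) (q i) with ha00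
      set a10 := coeff (μ 1 0) (q i) with ha10
      set a01 := coeff (μ 0 1) (q i) with ha01
      set a20 := coeff (μ 2 0) (q i) with ha20
      set a11 := coeff (μ 1 1) (q i) with ha11
      set a02 := coeff (μ 0 2) (q i) with ha02
      set a30 := coeff (μ 3 0) (q i) with ha30
      set a21 := coeff (μ 2 1) (q i) with ha21
      set a12 := coeff (μ 1 2) (q i) with ha12
      set a03 := coeff (μ 0 3) (q i) with ha03
      refine ⟨by linarith, by linarith, by linarith, by linarith, by linarith,
        by linarith, by linarith, by linarith, by linarith, by linarith⟩
    -- contradiction: f(0,0) = 1 but all q i vanish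
    have h00 := hP 0 0
    have hz : (∑ i, (coeff (μ 0 0) (q i) + coeff (μ 1 0) (q i) * (0:ℝ)
        + coeff (μ 0 1) (q i) * (0:ℝ)
        + coeff (μ 2 0) (q i) * (0:ℝ)^2 + coeff (μ 1 1) (q i) * ((0:ℝ)*(0:ℝ))
        + coeff (μ 0 2) (q i) * (0:ℝ)^2
        + coeff (μ 3 0) (q i) * (0:ℝ)^3 + coeff (μ 2 1) (q i) * ((0:ℝ)^2*(0:ℝ))
        + coeff (μ 1 2) (q i) * ((0:ℝ)*(0:ℝ)^2) + coeff (μ 0 3) (q i) * (0:ℝ)^3)^2) = 0 := by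
      apply Finset.sum_eq_zero
      intro i _
      obtain ⟨h1, _⟩ := hqz i
      rw [h1]
      ring
    rw [hz] at h00
    norm_num at h00
end
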